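/- arXiv:2212.05308 — 2 statements merged into one kernel-verified Lean document; each statement's English description precedes it below -/
import Mathlib

section
/- For a T-periodic linear control system, if x ∈ R_{kT+τ}(τ, 0) and y ∈ R_{ℓT+τ}(τ, 0) for k, ℓ ∈ ℕ and τ ∈ [0,T], then x + X(T+τ,τ)^k y ∈ R_{(k+ℓ)T+τ}(τ, 0), where X is the principal fundamental solution. -/
open MeasureTheory

/-- The time-`t` reachable set from `0` at initial time `τ` of the periodic linear
control system, given by the variation-of-parameters formula. -/
def reachSet0 (d m : ℕ) (X : ℝ → ℝ → ((Fin d → ℝ) →L[ℝ] (Fin d → ℝ)))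
    (B : ℝ → ((Fin m → ℝ) →L[ℝ] (Fin d → ℝ))) (U : Set (Fin m → ℝ))
    (t t0 : ℝ) : Set (Fin d → ℝ) :=
  {y | ∃ u : ℝ → Fin m → ℝ, Measurable u ∧ (∀ᵐ s ∂volume, u s ∈ U) ∧
    y = ∫ s in t0..t, X t s (B s (u s))}

/-- If `x ∈ R_{kT+τ}(τ,0)` and `y ∈ R_{ℓT+τ}(τ,0)`, then
`x + X(T+τ,τ)^k y ∈ R_{(k+ℓ)T+τ}(τ,0)`. -/
theorem stmt5 (d m : ℕ) (T : ℝ) (hT : 0 < T) (τ : ℝ) (hτ : τ ∈ Set.Icc 0 T)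
    (X : ℝ → ℝ → ((Fin d → ℝ) →L[ℝ] (Fin d → ℝ)))
    (B : ℝ → ((Fin m → ℝ) →L[ℝ] (Fin d → ℝ)))
    (hXid : ∀ s, X s s = ContinuousLinearMap.id ℝ (Fin d → ℝ))
    (hXcoc : ∀ t r s, (X t r).comp (X r s) = X t s)
    (hXper : ∀ t s, X (t + T) (s + T) = X t s)
    (hBper : ∀ s, B (s + T) = B s)
    (U : Set (Fin m → ℝ))
    (hInt : ∀ u : ℝ → Fin m → ℝ, Measurable u → (∀ᵐ s ∂volume, u s ∈ U) →
      ∀ a b : ℝ, IntervalIntegrable (fun s => X b s (B s (u s))) volume a b)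
    (k l : ℕ) (x y : Fin d → ℝ)
    (hx : x ∈ reachSet0 d m X B U (k * T + τ) τ)
    (hy : y ∈ reachSet0 d m X B U (l * T + τ) τ) :
    x + ((X (T + τ) τ) ^ k) y ∈ reachSet0 d m X B U ((k + l) * T + τ) τ := by
  obtain ⟨ux, hux_m, hux_ae, hx⟩ := hx
  obtain ⟨uy, huy_m, huy_ae, hy⟩ := hy
  set c : ℝ := (l : ℝ) * T with hc
  set tf : ℝ := ((k : ℝ) + (l : ℝ)) * T + τ with htf
  have htf' : tf = ((k : ℝ) * T + τ) + c := by rw [htf, hc]; ring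
  -- iterated periodicity
  have hXperN : ∀ n : ℕ, ∀ t s, X (t + (n : ℝ) * T) (s + (n : ℝ) * T) = X t s := by
    intro n
    induction n with
    | zero => intro t s; simp
    | succ n ih =>
      intro t s
      have h1 : t + ((n + 1 : ℕ) : ℝ) * T = (t + T) + (n : ℝ) * T := by push_cast; ring
      have h2 : s + ((n + 1 : ℕ) : ℝ) * T = (s + T) + (n : ℝ) * T := by push_cast; ring
      rw [h1, h2, ih, hXper]
  have hBperN : ∀ n : ℕ, ∀ s, B (s + (n : ℝ) * T) = B s := by
    intro n
    induction n with
    | zero => intro s; simp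
    | succ n ih =>
      intro s
      have h1 : s + ((n + 1 : ℕ) : ℝ) * T = (s + (n : ℝ) * T) + T := by push_cast; ring
      rw [h1, hBper, ih]
  -- powers of the monodromy operator
  have hpow : ∀ n : ℕ, X ((n : ℝ) * T + τ) τ = (X (T + τ) τ) ^ n := by
    intro n
    induction n with
    | zero => simp only [Nat.cast_zero, zero_mul, zero_add, pow_zero, hXid]; rfl
    | succ n ih =>
      have h1 : X (((n + 1 : ℕ) : ℝ) * T + τ) ((n : ℝ) * T + τ) = X (T + τ) τ := by
        have := hXperN n (T + τ) τ
        have e1 : ((n + 1 : ℕ) : ℝ) * T + τ = (T + τ) + (n : ℝ) * T := by push_cast; ring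
        have e2 : (n : ℝ) * T + τ = τ + (n : ℝ) * T := by ring
        rw [e1, e2, this]
      have h2 := hXcoc (((n + 1 : ℕ) : ℝ) * T + τ) ((n : ℝ) * T + τ) τ
      rw [← h2, h1, ih, pow_succ']
      rfl
  -- the concatenated control
  set u : ℝ → Fin m → ℝ := fun s => if s < c + τ then uy s else ux (s - c) with hu
  have hu_m : Measurable u := by
    apply Measurable.ite measurableSet_Iio huy_m
    exact hux_m.comp (measurable_id.sub measurable_const)
  have hax : ∀ᵐ s ∂(volume : Measure ℝ), ux (s - c) ∈ U :=
    ((measurePreserving_sub_right (volume : Measure ℝ) c).quasiMeasurePreserving.tendsto_ae).eventually hux_ae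
  have hu_ae : ∀ᵐ s ∂(volume : Measure ℝ), u s ∈ U := by
    filter_upwards [huy_ae, hax] with s h1 h2
    rw [hu]; dsimp only; split <;> assumption
  refine ⟨u, hu_m, hu_ae, ?_⟩
  have hI : IntervalIntegrable (fun s => X tf s (B s (u s))) volume τ tf :=
    hInt u hu_m hu_ae τ tf
  have hτc : τ ≤ c + τ := by
    have : (0 : ℝ) ≤ c := by positivity
    linarith
  have hctf : c + τ ≤ tf := by
    rw [htf']
    have : (0 : ℝ) ≤ (k : ℝ) * T := by positivity
    have hτ0 : 0 ≤ τ := hτ.1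
    linarith
  have hmem1 : c + τ ∈ Set.uIcc τ tf := by
    rw [Set.uIcc_of_le (le_trans hτc hctf)]
    exact ⟨hτc, hctf⟩
  have hI1 : IntervalIntegrable (fun s => X tf s (B s (u s))) volume τ (c + τ) :=
    hI.mono_set (Set.uIcc_subset_uIcc Set.left_mem_uIcc hmem1)
  have hI2 : IntervalIntegrable (fun s => X tf s (B s (u s))) volume (c + τ) tf :=
    hI.mono_set (Set.uIcc_subset_uIcc hmem1 Set.right_mem_uIcc)
  have hsplit := intervalIntegral.integral_add_adjacent_intervals hI1 hI2
  rw [← hsplit]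
  -- first piece equals X tf (c+τ) applied to y
  have hfirst : (∫ s in τ..(c + τ), X tf s (B s (u s))) = X tf (c + τ) y := by
    have hcongr : (∫ s in τ..(c + τ), X tf s (B s (u s)))
        = ∫ s in τ..(c + τ), X tf (c + τ) (X (c + τ) s (B s (uy s))) := by
      apply intervalIntegral.integral_congr_ae
      have hne : ∀ᵐ s ∂(volume : Measure ℝ), s ≠ c + τ :=
        ae_iff.2 (by simpa using volume_singleton (a := c + τ))
      filter_upwards [hne] with s hs hmem
      have hτle : τ ≤ c + τ := by
        have : (0 : ℝ) ≤ c := by positivity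
        linarith
      rw [Set.uIoc_of_le hτle] at hmem
      have hlt : s < c + τ := lt_of_le_of_ne hmem.2 hs
      have : u s = uy s := if_pos hlt
      rw [this, ← hXcoc tf (c + τ) s]
      rfl
    rw [hcongr, ContinuousLinearMap.intervalIntegral_comp_comm _ (hInt uy huy_m huy_ae τ (c + τ))]
    congr 1
    rw [hy]
  -- second piece equals x
  have hsecond : (∫ s in (c + τ)..tf, X tf s (B s (u s))) = x := by
    have hptw : ∀ s ∈ Set.uIoc (c + τ) tf,
        X tf s (B s (u s)) = (fun σ => X ((k : ℝ) * T + τ) σ (B σ (ux σ))) (s - c) := by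
      intro s hmem
      have hcle : c + τ ≤ tf := by
        rw [htf']
        have : (0 : ℝ) ≤ (k : ℝ) * T := by positivity
        have hτ0 : 0 ≤ τ := hτ.1
        linarith
      rw [Set.uIoc_of_le hcle] at hmem
      have hnlt : ¬ s < c + τ := not_lt.2 (le_of_lt hmem.1)
      have hus : u s = ux (s - c) := if_neg hnlt
      have hXs : X tf s = X ((k : ℝ) * T + τ) (s - c) := by
        have := hXperN l ((k : ℝ) * T + τ) (s - c)
        rw [← hc] at this
        rw [htf']
        rw [← this]
        congr 1
        ring
      have hBs : B s = B (s - c) := by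
        have := hBperN l (s - c)
        rw [← hc] at this
        rw [← this]
        congr 1
        ring
      rw [hus, hXs, hBs]
    rw [intervalIntegral.integral_congr_ae (ae_of_all _ hptw),
      intervalIntegral.integral_comp_sub_right (fun σ => X ((k : ℝ) * T + τ) σ (B σ (ux σ))) c]
    have e1 : c + τ - c = τ := by ring
    have e2 : tf - c = (k : ℝ) * T + τ := by rw [htf']; ring
    rw [e1, e2, hx]
  rw [hfirst, hsecond]
  have hXpow : X tf (c + τ) = (X (T + τ) τ) ^ k := by
    have := hXperN l ((k : ℝ) * T + τ) τ
    rw [← hc] at this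
    have e : tf = ((k : ℝ) * T + τ) + c := htf'
    have e2 : c + τ = τ + c := by ring
    rw [e, e2, this, hpow]
  rw [hXpow, add_comm]
end

section
/- Let δ > 0 and μ ∈ ℂ with |μ| ≥ 1. Then there exist a strictly increasing sequence n_k → ∞ and complex numbers a_{n_k} with |a_{n_k}| < δ such that μ^{n_k} a_{n_k} ∈ ℝ and |μ^{n_k} a_{n_k}| ≥ δ/2 for all k. -/
/-- Let `δ > 0` and `μ ∈ ℂ` with `|μ| ≥ 1`. Then there exist a strictly increasing
sequence `n_k → ∞` and complex numbers `a_{n_k}` with `|a_{n_k}| < δ` such that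
`μ^{n_k} a_{n_k}` is real and `|μ^{n_k} a_{n_k}| ≥ δ/2` for all `k`. -/
theorem stmt7 (δ : ℝ) (hδ : 0 < δ) (μ : ℂ) (hμ : 1 ≤ ‖μ‖) :
    ∃ n : ℕ → ℕ, StrictMono n ∧ ∃ a : ℕ → ℂ,
      ∀ k, ‖a k‖ < δ ∧ (μ ^ n k * a k).im = 0 ∧
        δ / 2 ≤ ‖μ ^ n k * a k‖ := by
  have hμ0 : μ ≠ 0 := by
    intro h; simp only [h, norm_zero] at hμ; linarith
  refine ⟨id, strictMono_id, fun k => ((2 * δ / 3 : ℝ) : ℂ) / μ ^ k, fun k => ?_⟩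
  have hpow : μ ^ k ≠ 0 := pow_ne_zero _ hμ0
  have hval : μ ^ (id k) * (((2 * δ / 3 : ℝ) : ℂ) / μ ^ k) = ((2 * δ / 3 : ℝ) : ℂ) := by
    field_simp; simp only [id]; ring
  have habspow : 1 ≤ ‖μ ^ k‖ := by
    rw [norm_pow]; exact one_le_pow₀ hμ
  refine ⟨?_, ?_, ?_⟩
  · rw [norm_div, Complex.norm_real, Real.norm_eq_abs, abs_of_pos (by linarith)]
    calc 2 * δ / 3 / ‖μ ^ k‖ ≤ 2 * δ / 3 / 1 :=
          div_le_div_of_nonneg_left (by linarith) one_pos habspow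
      _ < δ := by linarith
  · rw [hval]; simp
  · rw [hval, Complex.norm_real, Real.norm_eq_abs, abs_of_pos (by linarith)]; linarith
end
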